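/- Let μ ∈ ℤ^k. The map sending a tunnel hook covering γ of D_μ with terminal cells τ_r = (p_r,q_r) (r = 1,…,k) to the sequence σ(γ) = (p_1 − q_1 + 1, p_2 − q_2 + 1, …, p_k − q_k + 1) is a bijection from the set of tunnel hook coverings of D_μ onto the symmetric group S_k; its inverse sends σ ∈ S_k to the tunnel hook covering with terminal cells τ_r = (σ_r + m_r, 1 + m_r), where m_r = #{ i ∈ {1,…,k} : i < r and σ_i > σ_r }. -/

import Mathlib

open scoped BigOperators

/-- NSym modeled as the free noncommutative ℚ-algebra on generators indexed by ℕ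
(the generator `n` playing the role of `H_n` for `n ≥ 1`). -/
abbrev NSym : Type := FreeAlgebra ℚ ℕ

/-- The complete homogeneous noncommutative symmetric functions, extended to ℤ:
`H 0 = 1`, `H n = 0` for `n < 0`, and `H n` the `n`-th generator for `n ≥ 1`. -/
noncomputable def H (n : ℤ) : NSym :=
  if n < 0 then 0 else if n = 0 then 1 else FreeAlgebra.ι ℚ n.toNat

/-- `DecFrom k r ν` : `ν_r ≥ ν_{r+1} ≥ … ≥ ν_k` (1-based indexing). -/
def DecFrom (k r : ℕ) (ν : ℕ → ℕ) : Prop :=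
  ∀ i, r ≤ i → i < k → ν (i + 1) ≤ ν i

/-- `(p,q)` is a boundary cell of the partial GBPR diagram `D^{(r-1)}_{μ/ν}`. -/
def IsBoundary (k r : ℕ) (μ : ℕ → ℤ) (ν : ℕ → ℕ) (p q : ℕ) : Prop :=
  r ≤ p ∧ p ≤ k ∧
    (if p = r then
      ν r + 1 ≤ q ∧ (q : ℤ) ≤ max ((ν r : ℤ) + 1) (max (μ r) (2 * (ν r : ℤ) - μ r))
    else
      ν p + 1 ≤ q ∧ q ≤ ν (p - 1) + 1)

/-- `(p,q)` is a tunnel cell of `D^{(r-1)}_{μ/ν}`. -/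
def IsTunnel (k r : ℕ) (μ : ℕ → ℤ) (ν : ℕ → ℕ) (p q : ℕ) : Prop :=
  IsBoundary k r μ ν p q ∧ q = ν p + 1

/-- The set of boundary cells of `D^{(r-1)}_{μ/ν}` not tunnel cells. -/
def IsN (k r : ℕ) (μ : ℕ → ℤ) (ν : ℕ → ℕ) (p q : ℕ) : Prop :=
  IsBoundary k r μ ν p q ∧ ¬ IsTunnel k r μ ν p q

/-- The tunnel hook `h(r,τ)` for a tunnel cell `τ = (p,q)` of `D^{(r-1)}_{μ/ν}`:
all boundary cells in rows `r` through `p`. -/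
def hook (k r : ℕ) (μ : ℕ → ℤ) (ν : ℕ → ℕ) (p : ℕ) : Set (ℕ × ℕ) :=
  {c : ℕ × ℕ | IsBoundary k r μ ν c.1 c.2 ∧ c.1 ≤ p}

/-- The value `Δ(h(r,τ)) = (μ_r − ν_r) + (ν_r + 1 − q) + (p − r)` for `τ = (p,q)`. -/
def hookDelta (μ : ℕ → ℤ) (ν : ℕ → ℕ) (r p q : ℕ) : ℤ :=
  (μ r - (ν r : ℤ)) + (((ν r : ℤ) + 1) - (q : ℤ)) + ((p : ℤ) - (r : ℤ))

/-- The update `ν ↦ ν^{(r)}`: `ν'_i = ν_{i-1} + 1` for `r < i ≤ p`, else `ν'_i = ν_i`. -/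
def nuUpdate (ν : ℕ → ℕ) (r p : ℕ) : ℕ → ℕ := fun i =>
  if r < i ∧ i ≤ p then ν (i - 1) + 1 else ν i

/-- The sequence `ν^{(0)}, ν^{(1)}, …` of intermediate shapes of a tunnel hook covering
with terminal rows `p 1, p 2, …`. -/
def nuSeq (ν₀ : ℕ → ℕ) (p : ℕ → ℕ) : ℕ → ℕ → ℕ
  | 0 => ν₀
  | r + 1 => nuUpdate (nuSeq ν₀ p r) (r + 1) (p (r + 1))

/-- A tunnel hook covering of `D_{μ/ν₀}` : for each `r = 1, …, k` a tunnel cell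
`(p r, q r)` of `D^{(r-1)}_{μ/ν^{(r-1)}}` (values outside `1 ≤ r ≤ k` normalized to `0`). -/
structure THC (k : ℕ) (μ : ℕ → ℤ) (ν₀ : ℕ → ℕ) where
  p : ℕ → ℕ
  q : ℕ → ℕ
  tunnel : ∀ r, 1 ≤ r → r ≤ k → IsTunnel k r μ (nuSeq ν₀ p (r - 1)) (p r) (q r)
  p_out : ∀ r, r = 0 ∨ k < r → p r = 0
  q_out : ∀ r, r = 0 ∨ k < r → q r = 0

/-- Row-ordered noncommutative determinant (Laplace expansion from the top row down). -/
noncomputable def ndet {k : ℕ} (A : Fin k → Fin k → NSym) : NSym :=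
  ∑ σ : Equiv.Perm (Fin k),
    ((Equiv.Perm.sign σ : ℤ) • (List.ofFn fun i => A i (σ i)).prod)

/-- The immaculate function `I_μ = ndet (H_{μ_i + j − i})` (1-based `μ`). -/
noncomputable def Imm (k : ℕ) (μ : ℕ → ℤ) : NSym :=
  ndet fun i j : Fin k => H (μ (i.1 + 1) + ((j.1 : ℤ) + 1) - ((i.1 : ℤ) + 1))

/-- The skew immaculate function `I_{μ/ν} = ndet (H_{(μ_i − i) − (ν_j − j)})`. -/
noncomputable def ImmSkew (k : ℕ) (μ ν : ℕ → ℤ) : NSym :=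
  ndet fun i j : Fin k =>
    H ((μ (i.1 + 1) - ((i.1 : ℤ) + 1)) - (ν (j.1 + 1) - ((j.1 : ℤ) + 1)))

/-- The signed product `∏_{r=1}^{k} ε(h(r,τ_r)) H_{Δ(h(r,τ_r))}` attached to a
tunnel hook covering, the product taken in the order `r = 1, …, k`. -/
noncomputable def thcTerm (k : ℕ) (μ : ℕ → ℤ) (ν₀ : ℕ → ℕ) (γ : THC k μ ν₀) : NSym :=
  (List.ofFn fun r : Fin k =>
    (-1 : NSym) ^ (γ.p (r.1 + 1) - (r.1 + 1)) *
      H (hookDelta μ (nuSeq ν₀ γ.p r.1) (r.1 + 1) (γ.p (r.1 + 1)) (γ.q (r.1 + 1)))).prod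
/-- Two cells are adjacent iff their taxicab distance is 1. -/
def Adj (c d : ℕ × ℕ) : Prop :=
  ((c.1 : ℤ) - (d.1 : ℤ)).natAbs + ((c.2 : ℤ) - (d.2 : ℤ)).natAbs = 1

/-- A set of cells is connected: any two of its cells are joined by a chain of
cells of the set in which consecutive cells are adjacent. -/
def ConnectedSet (C : Set (ℕ × ℕ)) : Prop :=
  ∀ c ∈ C, ∀ d ∈ C, ∃ l : List (ℕ × ℕ),
    l.head? = some c ∧ l.getLast? = some d ∧ (∀ x ∈ l, x ∈ C) ∧ l.Chain' Adj

/-- `m_r = #{ i < r : σ_i > σ_r }`. -/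
def mcount {k : ℕ} (σ : Equiv.Perm (Fin k)) (r : Fin k) : ℕ :=
  (Finset.univ.filter fun i : Fin k => i < r ∧ σ r < σ i).card

/-- The set `{σ_{r+1}, …, σ_k}` of one-line (1-based) values of `σ` at positions `> r`. -/
def onelineTail {k : ℕ} (σ : Equiv.Perm (Fin k)) (r : ℕ) : Finset ℕ :=
  (Finset.univ.filter fun i : Fin k => r < i.1 + 1).image fun i => (σ i).1 + 1

/-- `beta σ r t` : the `t`-th smallest element of `{σ_{r+1}, …, σ_k}`. -/
def beta {k : ℕ} (σ : Equiv.Perm (Fin k)) (r t : ℕ) : ℕ :=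
  ((onelineTail σ r).sort (· ≤ ·)).getD (t - 1) 0

/-- The exponent `δ` in the sign of a linear permutation `π ∈ A_{k,m}`. -/
def lpInv {k m : ℕ} (π : Fin m ↪ Fin k) : ℕ :=
  (Finset.univ.filter fun p : Fin m × Fin m => p.1 < p.2 ∧ π p.2 < π p.1).card +
  (Finset.univ.filter fun p : Fin m × Fin k => (∀ t, π t ≠ p.2) ∧ p.2 < π p.1).card

/-- `betaC π j` : the `j`-th smallest element of `{1,…,k} ∖ {π_1,…,π_m}` (1-based values). -/
def betaC {k m : ℕ} (π : Fin m ↪ Fin k) (j : ℕ) : ℕ :=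
  (((Finset.univ.filter fun q : Fin k => ∀ t, π t ≠ q).image fun q => q.1 + 1).sort
    (· ≤ ·)).getD (j - 1) 0

/-- Coarsening `Θ(α,S)` of a sequence: replace the comma at each position in `S`
(1-based; position `i` lies between parts `i` and `i+1`) by addition. -/
def theta {α : Type} [Add α] (S : Finset ℕ) : ℕ → List α → List α
  | _, [] => []
  | _, [a] => [a]
  | i, a :: b :: rest =>
      if i ∈ S then theta S (i + 1) ((a + b) :: rest)
      else a :: theta S (i + 1) (b :: rest)
  termination_by i l => l.length

noncomputable def Hlist (β : List ℤ) : NSym := (β.map H).prod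

/-- The ribbon function `R_β = Σ_{γ ⪰ β} (−1)^{ℓ(β)−ℓ(γ)} H_γ`, with `R_β = 0`
whenever `β` has a part `≤ 0`. -/
noncomputable def Ribbon (β : List ℤ) : NSym :=
  if ∀ x ∈ β, 0 < x then
    ∑ S ∈ (Finset.Icc 1 (β.length - 1)).powerset,
      (-1 : NSym) ^ (β.length - (theta S 1 β).length) * Hlist (theta S 1 β)
  else 0

section ThcAux

/-- Abbreviation for the nu-sequence starting from the empty shape. -/
def nuu (p : ℕ → ℕ) : ℕ → ℕ → ℕ := nuSeq (fun _ => 0) p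

lemma nuu_zero (p : ℕ → ℕ) (i : ℕ) : nuu p 0 i = 0 := rfl

lemma nuu_succ (p : ℕ → ℕ) (r i : ℕ) :
    nuu p (r+1) i = if r + 1 < i ∧ i ≤ p (r+1) then nuu p r (i-1) + 1 else nuu p r i := rfl

lemma nuu_le (p : ℕ → ℕ) : ∀ r i, r < i → nuu p r i ≤ r := by
  intro r
  induction r with
  | zero => intro i _; simp [nuu_zero]
  | succ r ih =>
    intro i hi
    rw [nuu_succ]
    split_ifs with h
    · exact Nat.succ_le_succ (ih (i-1) (by omega))
    · exact le_trans (ih i (by omega)) (by omega)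

lemma nuu_anti (p : ℕ → ℕ) : ∀ r i, r < i → nuu p r (i+1) ≤ nuu p r i := by
  intro r
  induction r with
  | zero => intro i _; simp [nuu_zero]
  | succ r ih =>
    intro i hi
    rw [nuu_succ, nuu_succ]
    have e2 : nuu p r ((i-1)+1) ≤ nuu p r (i-1) := ih (i-1) (by omega)
    have e3 : (i-1)+1 = i := by omega
    rw [e3] at e2
    have e1 : nuu p r (i+1) ≤ nuu p r i := ih i (by omega)
    split_ifs with h1 h2 h2
    · simp only [Nat.add_sub_cancel]; omega
    · omega
    · omega
    · omega

/-- The remaining value in row `i` after `r` steps. -/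
def Vv (p : ℕ → ℕ) (r i : ℕ) : ℕ := i - nuu p r i

lemma nuu_add_Vv (p : ℕ → ℕ) {r i : ℕ} (h : r < i) : nuu p r i + Vv p r i = i := by
  have := nuu_le p r i h
  unfold Vv; omega

lemma Vv_lt_succ (p : ℕ → ℕ) {r i : ℕ} (h : r < i) : Vv p r i < Vv p r (i+1) := by
  have h1 := nuu_anti p r i h
  have h2 := nuu_le p r i h
  unfold Vv; omega

lemma Vv_lt (p : ℕ → ℕ) {r i j : ℕ} (hi : r < i) (hij : i < j) : Vv p r i < Vv p r j := by
  induction j with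
  | zero => omega
  | succ j ih =>
    rcases Nat.lt_succ_iff_lt_or_eq.mp hij with h | h
    · exact lt_trans (ih h) (Vv_lt_succ p (by omega))
    · subst h; exact Vv_lt_succ p hi


/-- The value extracted at step `r`. -/
def sva (p : ℕ → ℕ) (r : ℕ) : ℕ := p r - nuu p (r-1) (p r)

/-- The state function after `r` steps: used values at positions `≤ r`,
remaining values at positions `> r`. -/
def Ff (p : ℕ → ℕ) (r i : ℕ) : ℕ := if i ≤ r then sva p i else i - nuu p r i

def gg (p : ℕ → ℕ) (r i : ℕ) : ℕ :=
  if i = r then p r else if r < i ∧ i ≤ p r then i - 1 else i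

def gg' (p : ℕ → ℕ) (r x : ℕ) : ℕ :=
  if x = p r then r else if r ≤ x ∧ x < p r then x + 1 else x

lemma gg_bijOn (p : ℕ → ℕ) {k r : ℕ} (hr : 1 ≤ r) (hrp : r ≤ p r) (hpk : p r ≤ k) :
    Set.BijOn (gg p r) (Set.Icc 1 k) (Set.Icc 1 k) := by
  have hmt : Set.MapsTo (gg p r) (Set.Icc 1 k) (Set.Icc 1 k) := by
    intro x hx
    simp only [Set.mem_Icc] at *
    unfold gg; split_ifs <;> omega
  have hmt' : Set.MapsTo (gg' p r) (Set.Icc 1 k) (Set.Icc 1 k) := by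
    intro x hx
    simp only [Set.mem_Icc] at *
    unfold gg'; split_ifs <;> omega
  refine Set.InvOn.bijOn ⟨?_, ?_⟩ hmt hmt'
  · intro x hx
    simp only [Set.mem_Icc] at hx
    unfold gg gg'
    split_ifs <;> omega
  · intro x hx
    simp only [Set.mem_Icc] at hx
    unfold gg gg'
    split_ifs <;> omega

lemma Ff_comp (p : ℕ → ℕ) {r : ℕ} (hr : r + 1 ≤ p (r+1)) :
    ∀ i, 1 ≤ i → Ff p (r+1) i = Ff p r (gg p (r+1) i) := by
  intro i hi
  rcases lt_trichotomy i (r+1) with h | h | h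
  · -- i ≤ r
    have h1 : gg p (r+1) i = i := by unfold gg; split_ifs <;> omega
    rw [h1]; unfold Ff; rw [if_pos (by omega), if_pos (by omega)]
  · -- i = r+1
    subst h
    have h1 : gg p (r+1) (r+1) = p (r+1) := by unfold gg; rw [if_pos rfl]
    rw [h1]; unfold Ff
    rw [if_pos le_rfl, if_neg (by omega)]
    unfold sva
    simp only [Nat.add_sub_cancel]
  · by_cases h2 : i ≤ p (r+1)
    · have h1 : gg p (r+1) i = i - 1 := by unfold gg; rw [if_neg (by omega), if_pos ⟨h, h2⟩]
      rw [h1]; unfold Ff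
      rw [if_neg (by omega), if_neg (by omega), nuu_succ, if_pos ⟨h, h2⟩]
      have := nuu_le p r (i-1) (by omega)
      omega
    · have h1 : gg p (r+1) i = i := by unfold gg; split_ifs <;> omega
      rw [h1]; unfold Ff
      rw [if_neg (by omega), if_neg (by omega), nuu_succ, if_neg (by omega)]

lemma Ff_bijOn (p : ℕ → ℕ) (k : ℕ) :
    ∀ r, r ≤ k → (∀ j, 1 ≤ j → j ≤ r → j ≤ p j ∧ p j ≤ k) →
    Set.BijOn (Ff p r) (Set.Icc 1 k) (Set.Icc 1 k) := by
  intro r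
  induction r with
  | zero =>
    intro _ _
    refine Set.BijOn.congr (Set.bijOn_id _) ?_
    intro i hi
    simp only [Set.mem_Icc] at hi
    unfold Ff
    rw [if_neg (by omega), nuu_zero]
    simp only [id_eq]; omega
  | succ r ih =>
    intro hk hb
    have hbr := hb (r+1) (by omega) le_rfl
    have hcomp := (ih (by omega) (fun j h1 h2 => hb j h1 (by omega))).comp
      (gg_bijOn p (by omega) hbr.1 hbr.2)
    refine Set.BijOn.congr hcomp ?_
    intro i hi
    simp only [Set.mem_Icc] at hi
    exact (Ff_comp p hbr.1 i hi.1).symm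

lemma card_filter_gt (k s0 : ℕ) :
    ((Finset.Icc 1 k).filter fun v => s0 < v).card = k - s0 := by
  have h : ((Finset.Icc 1 k).filter fun v => s0 < v) = Finset.Icc (s0+1) k := by
    ext v
    simp only [Finset.mem_filter, Finset.mem_Icc]
    omega
  rw [h, Nat.card_Icc]
  omega

lemma card_filter_Ff (p : ℕ → ℕ) (k r : ℕ)
    (hbij : Set.BijOn (Ff p r) (Set.Icc 1 k) (Set.Icc 1 k)) (s0 : ℕ) :
    ((Finset.Icc 1 k).filter fun y => s0 < Ff p r y).card = k - s0 := by
  rw [← card_filter_gt k s0]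
  apply Finset.card_nbij (i := Ff p r)
  · intro a ha
    simp only [Finset.mem_coe, Finset.mem_filter, Finset.mem_Icc] at ha ⊢
    have h2 := hbij.mapsTo (Set.mem_Icc.mpr ⟨ha.1.1, ha.1.2⟩)
    rw [Set.mem_Icc] at h2
    exact ⟨⟨h2.1, h2.2⟩, ha.2⟩
  · exact hbij.injOn.mono (by intro x hx; simp only [Finset.coe_filter, Set.mem_setOf_eq,
      Finset.mem_Icc, Set.mem_Icc] at *; exact hx.1)
  · intro b hb
    simp only [Finset.coe_filter, Set.mem_setOf_eq, Finset.mem_Icc] at hb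
    obtain ⟨a, ha, hfa⟩ := hbij.surjOn (Set.mem_Icc.mpr hb.1)
    refine ⟨a, ?_, hfa⟩
    simp only [Finset.coe_filter, Set.mem_setOf_eq, Finset.mem_Icc]
    exact ⟨Set.mem_Icc.mp ha, by rw [hfa]; exact hb.2⟩

lemma filter_Icc_split (k r : ℕ) (hr : 1 ≤ r) (hk : r ≤ k) (P : ℕ → Prop) [DecidablePred P] :
    ((Finset.Icc 1 k).filter P).card
      = ((Finset.Icc 1 (r-1)).filter P).card + ((Finset.Icc r k).filter P).card := by
  have h : Finset.Icc 1 k = Finset.Icc 1 (r-1) ∪ Finset.Icc r k := by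
    ext x; simp only [Finset.mem_Icc, Finset.mem_union]; omega
  rw [h, Finset.filter_union, Finset.card_union_of_disjoint]
  refine Finset.disjoint_left.mpr ?_
  intro x hx hx'
  simp only [Finset.mem_filter, Finset.mem_Icc] at *
  omega

/-- The key counting lemma: at stage `r-1`, if `x` is a free row (`r ≤ x ≤ k`),
then the number of previously used values bigger than the value of row `x`,
plus that value, equals `x`. -/
lemma count_lemma (p : ℕ → ℕ) (k r x : ℕ) (hr : 1 ≤ r) (hrk : r ≤ k)
    (hb : ∀ j, 1 ≤ j → j ≤ r - 1 → j ≤ p j ∧ p j ≤ k)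
    (hx1 : r ≤ x) (hx2 : x ≤ k) :
    ((Finset.Icc 1 (r-1)).filter fun j => x - nuu p (r-1) x < sva p j).card
      + (x - nuu p (r-1) x) = x := by
  set s0 := x - nuu p (r-1) x with hs0
  have hnu : nuu p (r-1) x ≤ r - 1 := nuu_le p (r-1) x (by omega)
  have hbij := Ff_bijOn p k (r-1) (by omega) hb
  have htot := card_filter_Ff p k (r-1) hbij s0
  rw [filter_Icc_split k r hr hrk] at htot
  have h1 : ((Finset.Icc 1 (r-1)).filter fun y => s0 < Ff p (r-1) y)
      = ((Finset.Icc 1 (r-1)).filter fun j => s0 < sva p j) := by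
    apply Finset.filter_congr
    intro y hy
    simp only [Finset.mem_Icc] at hy
    unfold Ff
    rw [if_pos hy.2]
  have h2 : ((Finset.Icc r k).filter fun y => s0 < Ff p (r-1) y) = Finset.Icc (x+1) k := by
    ext y
    simp only [Finset.mem_filter, Finset.mem_Icc]
    constructor
    · rintro ⟨⟨hy1, hy2⟩, hy3⟩
      rw [Ff, if_neg (by omega)] at hy3
      by_contra hc
      push_neg at hc
      have hyx : y ≤ x := by omega
      rcases Nat.lt_or_ge y x with h | h
      · have := Vv_lt p (r := r-1) (i := y) (j := x) (by omega) h
        unfold Vv at this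
        omega
      · have : y = x := by omega
        subst this
        omega
    · rintro ⟨hy1, hy2⟩
      have hge : r ≤ y := by omega
      refine ⟨⟨hge, hy2⟩, ?_⟩
      rw [Ff, if_neg (by omega)]
      have := Vv_lt p (r := r-1) (i := x) (j := y) (by omega) (by omega)
      unfold Vv at this
      omega
  rw [h1, h2, Nat.card_Icc] at htot
  omega

/-- One-line value of `σ` at 1-based position `r` (0 outside `[1,k]`). -/
def snat {k : ℕ} (σ : Equiv.Perm (Fin k)) (r : ℕ) : ℕ :=
  if h : 1 ≤ r ∧ r ≤ k then (σ ⟨r-1, by omega⟩).1 + 1 else 0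

def mnat {k : ℕ} (σ : Equiv.Perm (Fin k)) (r : ℕ) : ℕ :=
  if h : 1 ≤ r ∧ r ≤ k then mcount σ ⟨r-1, by omega⟩ else 0

def Pp {k : ℕ} (σ : Equiv.Perm (Fin k)) (r : ℕ) : ℕ :=
  if 1 ≤ r ∧ r ≤ k then snat σ r + mnat σ r else 0

def Qq {k : ℕ} (σ : Equiv.Perm (Fin k)) (r : ℕ) : ℕ :=
  if 1 ≤ r ∧ r ≤ k then 1 + mnat σ r else 0

lemma snat_pos_le {k : ℕ} (σ : Equiv.Perm (Fin k)) {r : ℕ} (h1 : 1 ≤ r) (h2 : r ≤ k) :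
    1 ≤ snat σ r ∧ snat σ r ≤ k := by
  rw [snat, dif_pos ⟨h1, h2⟩]
  have := (σ ⟨r-1, by omega⟩).2
  omega

lemma snat_inj {k : ℕ} (σ : Equiv.Perm (Fin k)) {a b : ℕ} (ha1 : 1 ≤ a) (ha2 : a ≤ k)
    (hb1 : 1 ≤ b) (hb2 : b ≤ k) (h : snat σ a = snat σ b) : a = b := by
  rw [snat, dif_pos ⟨ha1, ha2⟩, snat, dif_pos ⟨hb1, hb2⟩] at h
  have h2 : σ ⟨a-1, by omega⟩ = σ ⟨b-1, by omega⟩ := Fin.ext (by omega)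
  have h3 := σ.injective h2
  have h4 : a - 1 = b - 1 := congrArg Fin.val h3
  omega

lemma mnat_eq_card {k : ℕ} (σ : Equiv.Perm (Fin k)) {r : ℕ} (h1 : 1 ≤ r) (h2 : r ≤ k) :
    mnat σ r = ((Finset.Icc 1 (r-1)).filter fun j => snat σ r < snat σ j).card := by
  rw [mnat, dif_pos ⟨h1, h2⟩, mcount]
  refine Finset.card_bij' (fun (a : Fin k) _ => a.1 + 1)
    (fun (b : ℕ) hb => (⟨b - 1, by
      simp only [Finset.mem_filter, Finset.mem_Icc] at hb; omega⟩ : Fin k)) ?_ ?_ ?_ ?_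
  · intro a ha
    simp only [Finset.mem_filter, Finset.mem_univ, true_and] at ha
    simp only [Finset.mem_filter, Finset.mem_Icc]
    have hlt : a.1 < r - 1 := ha.1
    refine ⟨⟨by omega, by omega⟩, ?_⟩
    rw [snat, dif_pos ⟨h1, h2⟩, snat, dif_pos ⟨by omega, by omega⟩]
    have he : (⟨a.1 + 1 - 1, by omega⟩ : Fin k) = a := by
      apply Fin.ext
      show a.1 + 1 - 1 = a.1
      omega
    rw [he]
    exact Nat.add_lt_add_right ha.2 1
  · intro b hb
    have hb' := hb
    simp only [Finset.mem_filter, Finset.mem_Icc] at hb'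
    simp only [Finset.mem_filter, Finset.mem_univ, true_and]
    rw [snat, dif_pos ⟨h1, h2⟩, snat, dif_pos ⟨by omega, by omega⟩] at hb'
    constructor
    · show (⟨b - 1, _⟩ : Fin k) < (⟨r - 1, _⟩ : Fin k)
      simp only [Fin.mk_lt_mk]
      omega
    · exact Nat.lt_of_add_lt_add_right hb'.2
  · intro a ha
    exact Fin.ext (by simp)
  · intro b hb
    simp only [Finset.mem_filter, Finset.mem_Icc] at hb
    show b - 1 + 1 = b
    omega

lemma sva_eq_snat {k : ℕ} (σ : Equiv.Perm (Fin k)) {j : ℕ} (h1 : 1 ≤ j) (h2 : j ≤ k)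
    (hnu : nuu (Pp σ) (j-1) (Pp σ j) = mnat σ j) : sva (Pp σ) j = snat σ j := by
  rw [sva, hnu]
  rw [Pp, if_pos ⟨h1, h2⟩]
  omega

/-- The key induction: the candidate terminal rows defined from `σ` satisfy the
required bounds and the `ν`-values at the terminal rows equal `m_r`. -/
lemma key_ind {k : ℕ} (σ : Equiv.Perm (Fin k)) :
    ∀ r, r ≤ k → ∀ j, 1 ≤ j → j ≤ r →
      j ≤ Pp σ j ∧ Pp σ j ≤ k ∧ nuu (Pp σ) (j-1) (Pp σ j) = mnat σ j := by
  intro r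
  induction r with
  | zero => omega
  | succ r ih =>
    intro hrk j hj1 hj2
    rcases Nat.lt_succ_iff_lt_or_eq.mp (Nat.lt_succ_of_le hj2) with h | h
    · exact ih (by omega) j hj1 (by omega)
    · subst h
      have hb : ∀ j', 1 ≤ j' → j' ≤ r → j' ≤ Pp σ j' ∧ Pp σ j' ≤ k := fun j' h1 h2 =>
        ⟨(ih (by omega) j' h1 h2).1, (ih (by omega) j' h1 h2).2.1⟩
      have hbij := Ff_bijOn (Pp σ) k r (by omega) hb
      have hs0 := snat_pos_le σ (r := r+1) (by omega) (by omega)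
      obtain ⟨x, hx, hFf⟩ := hbij.surjOn (Set.mem_Icc.mpr ⟨hs0.1, hs0.2⟩)
      rw [Set.mem_Icc] at hx
      have hxr : r + 1 ≤ x := by
        by_contra hc
        push_neg at hc
        have hxle : x ≤ r := by omega
        rw [Ff, if_pos hxle] at hFf
        have := sva_eq_snat σ hx.1 hx.2 (ih (by omega) x hx.1 hxle).2.2
        rw [this] at hFf
        have := snat_inj σ hx.1 hx.2 (by omega) (by omega) hFf
        omega
      rw [Ff, if_neg (by omega)] at hFf
      have hcl := count_lemma (Pp σ) k (r+1) x (by omega) hrk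
        (by simpa using hb) hxr hx.2
      simp only [Nat.add_sub_cancel] at hcl
      have hfc : ((Finset.Icc 1 r).filter fun j => x - nuu (Pp σ) r x < sva (Pp σ) j)
          = ((Finset.Icc 1 r).filter fun j => snat σ (r+1) < snat σ j) := by
        apply Finset.filter_congr
        intro y hy
        simp only [Finset.mem_Icc] at hy
        rw [sva_eq_snat σ hy.1 (by omega) (ih (by omega) y hy.1 hy.2).2.2, hFf]
      rw [hfc] at hcl
      have hmc := mnat_eq_card σ (r := r+1) (by omega) (by omega)
      simp only [Nat.add_sub_cancel] at hmc
      rw [← hmc] at hcl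
      have hnule : nuu (Pp σ) r x ≤ r := nuu_le (Pp σ) r x (by omega)
      have hPp : Pp σ (r+1) = x := by
        rw [Pp, if_pos ⟨by omega, by omega⟩]
        omega
      refine ⟨by omega, by omega, ?_⟩
      simp only [Nat.add_sub_cancel, hPp]
      omega

/-- The inverse map: the THC associated with a permutation. -/
noncomputable def fromPerm (k : ℕ) (μ : ℕ → ℤ) (σ : Equiv.Perm (Fin k)) :
    THC k μ (fun _ => 0) where
  p := Pp σ
  q := Qq σ
  tunnel := by
    intro r h1 h2
    obtain ⟨hle, hk', hnu⟩ := key_ind σ k le_rfl r h1 h2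
    have hq : Qq σ r = nuu (Pp σ) (r-1) (Pp σ r) + 1 := by
      rw [Qq, if_pos ⟨h1, h2⟩, hnu]
      omega
    have hnuseq : nuSeq (fun _ => 0) (Pp σ) (r-1) = nuu (Pp σ) (r-1) := rfl
    constructor
    · -- IsBoundary
      refine ⟨hle, hk', ?_⟩
      split_ifs with hpr
    -- p = r case
      · rw [hpr] at hq
        constructor
        · rw [hnuseq]
          omega
        · rw [hnuseq, hq]
          push_cast
          exact le_max_left _ _
      · constructor
        · rw [hnuseq]; omega
        · rw [hnuseq, hq]
          have hmono := nuu_anti (Pp σ) (r-1) (Pp σ r - 1) (by omega)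
          have he : Pp σ r - 1 + 1 = Pp σ r := by omega
          rw [he] at hmono
          omega
    · rw [hnuseq]
      exact hq
  p_out := by
    intro r h
    rw [Pp, if_neg (by omega)]
  q_out := by
    intro r h
    rw [Qq, if_neg (by omega)]

lemma thc_facts {k : ℕ} {μ : ℕ → ℤ} (γ : THC k μ (fun _ => 0)) {r : ℕ}
    (h1 : 1 ≤ r) (h2 : r ≤ k) :
    r ≤ γ.p r ∧ γ.p r ≤ k ∧ γ.q r = nuu γ.p (r-1) (γ.p r) + 1 := by
  obtain ⟨⟨ha, hb, _⟩, hq⟩ := γ.tunnel r h1 h2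
  exact ⟨ha, hb, hq⟩

lemma thc_bijOn {k : ℕ} {μ : ℕ → ℤ} (γ : THC k μ (fun _ => 0)) :
    Set.BijOn (fun i => sva γ.p i) (Set.Icc 1 k) (Set.Icc 1 k) := by
  refine Set.BijOn.congr (Ff_bijOn γ.p k k le_rfl ?_) ?_
  · intro j hj1 hj2
    exact ⟨(thc_facts γ hj1 hj2).1, (thc_facts γ hj1 hj2).2.1⟩
  · intro i hi
    rw [Set.mem_Icc] at hi
    unfold Ff
    rw [if_pos hi.2]

lemma sva_mem {k : ℕ} {μ : ℕ → ℤ} (γ : THC k μ (fun _ => 0)) {r : ℕ}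
    (h1 : 1 ≤ r) (h2 : r ≤ k) : 1 ≤ sva γ.p r ∧ sva γ.p r ≤ k := by
  have := (thc_bijOn γ).mapsTo (Set.mem_Icc.mpr ⟨h1, h2⟩)
  rw [Set.mem_Icc] at this
  exact this

/-- The forward map: the permutation associated with a THC. -/
noncomputable def toPerm {k : ℕ} {μ : ℕ → ℤ} (γ : THC k μ (fun _ => 0)) :
    Equiv.Perm (Fin k) :=
  Equiv.ofBijective (fun a => (⟨sva γ.p (a.1 + 1) - 1, by
      have h := sva_mem γ (r := a.1 + 1) (by omega) (by omega)
      omega⟩ : Fin k))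
    (by
      rw [Fintype.bijective_iff_injective_and_card]
      refine ⟨?_, rfl⟩
      intro a b hab
      have ha := sva_mem γ (r := a.1 + 1) (by omega) (by omega)
      have hb := sva_mem γ (r := b.1 + 1) (by omega) (by omega)
      have h2 : sva γ.p (a.1 + 1) - 1 = sva γ.p (b.1 + 1) - 1 := congrArg Fin.val hab
      have h3 : sva γ.p (a.1 + 1) = sva γ.p (b.1 + 1) := by omega
      have h4 := (thc_bijOn γ).injOn (Set.mem_Icc.mpr ⟨by omega, by omega⟩)
        (Set.mem_Icc.mpr ⟨by omega, by omega⟩) h3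
      exact Fin.ext (by omega))

lemma toPerm_val {k : ℕ} {μ : ℕ → ℤ} (γ : THC k μ (fun _ => 0)) (a : Fin k) :
    ((toPerm γ) a).1 = sva γ.p (a.1 + 1) - 1 := rfl

lemma snat_toPerm {k : ℕ} {μ : ℕ → ℤ} (γ : THC k μ (fun _ => 0)) {j : ℕ}
    (h1 : 1 ≤ j) (h2 : j ≤ k) : snat (toPerm γ) j = sva γ.p j := by
  rw [snat, dif_pos ⟨h1, h2⟩]
  have hv := toPerm_val γ ⟨j - 1, by omega⟩
  have he : (j - 1) + 1 = j := by omega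
  rw [he] at hv
  have := sva_mem γ h1 h2
  omega

lemma THC_ext {k : ℕ} {μ : ℕ → ℤ} {ν₀ : ℕ → ℕ} {γ δ : THC k μ ν₀}
    (hp : γ.p = δ.p) (hq : γ.q = δ.q) : γ = δ := by
  cases γ
  cases δ
  simp only at hp hq
  subst hp
  subst hq
  rfl

lemma fromPerm_toPerm {k : ℕ} {μ : ℕ → ℤ} (γ : THC k μ (fun _ => 0)) :
    fromPerm k μ (toPerm γ) = γ := by
  have hbnd : ∀ j, 1 ≤ j → j ≤ k - 1 → j ≤ γ.p j ∧ γ.p j ≤ k := fun j h1 h2 =>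
    ⟨(thc_facts γ h1 (by omega)).1, (thc_facts γ h1 (by omega)).2.1⟩
  apply THC_ext
  · funext r
    by_cases hr : 1 ≤ r ∧ r ≤ k
    · show Pp (toPerm γ) r = γ.p r
      obtain ⟨hf1, hf2, hf3⟩ := thc_facts γ hr.1 hr.2
      have hcl := count_lemma γ.p k r (γ.p r) hr.1 hr.2
        (fun j h1 h2 => ⟨(thc_facts γ h1 (by omega)).1, (thc_facts γ h1 (by omega)).2.1⟩)
        hf1 hf2
      have hsv : sva γ.p r = γ.p r - nuu γ.p (r-1) (γ.p r) := rfl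
      rw [Pp, if_pos hr, snat_toPerm γ hr.1 hr.2, mnat_eq_card (toPerm γ) hr.1 hr.2]
      have hfc : ((Finset.Icc 1 (r-1)).filter fun j => snat (toPerm γ) r < snat (toPerm γ) j)
          = ((Finset.Icc 1 (r-1)).filter fun j =>
              γ.p r - nuu γ.p (r-1) (γ.p r) < sva γ.p j) := by
        apply Finset.filter_congr
        intro y hy
        simp only [Finset.mem_Icc] at hy
        rw [snat_toPerm γ hr.1 hr.2, snat_toPerm γ hy.1 (by omega), hsv]
      rw [hfc]
      omega
    · show Pp (toPerm γ) r = γ.p r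
      rw [γ.p_out r (by omega), Pp, if_neg hr]
  · funext r
    by_cases hr : 1 ≤ r ∧ r ≤ k
    · show Qq (toPerm γ) r = γ.q r
      obtain ⟨hf1, hf2, hf3⟩ := thc_facts γ hr.1 hr.2
      have hcl := count_lemma γ.p k r (γ.p r) hr.1 hr.2
        (fun j h1 h2 => ⟨(thc_facts γ h1 (by omega)).1, (thc_facts γ h1 (by omega)).2.1⟩)
        hf1 hf2
      have hsv : sva γ.p r = γ.p r - nuu γ.p (r-1) (γ.p r) := rfl
      have hnule : nuu γ.p (r-1) (γ.p r) ≤ r - 1 := nuu_le γ.p (r-1) (γ.p r) (by omega)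
      rw [Qq, if_pos hr, mnat_eq_card (toPerm γ) hr.1 hr.2]
      have hfc : ((Finset.Icc 1 (r-1)).filter fun j => snat (toPerm γ) r < snat (toPerm γ) j)
          = ((Finset.Icc 1 (r-1)).filter fun j =>
              γ.p r - nuu γ.p (r-1) (γ.p r) < sva γ.p j) := by
        apply Finset.filter_congr
        intro y hy
        simp only [Finset.mem_Icc] at hy
        rw [snat_toPerm γ hr.1 hr.2, snat_toPerm γ hy.1 (by omega), hsv]
      rw [hfc]
      omega
    · show Qq (toPerm γ) r = γ.q r
      rw [γ.q_out r (by omega), Qq, if_neg hr]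

lemma toPerm_fromPerm {k : ℕ} (μ : ℕ → ℤ) (σ : Equiv.Perm (Fin k)) :
    toPerm (fromPerm k μ σ) = σ := by
  apply Equiv.ext
  intro a
  apply Fin.ext
  have hs := sva_eq_snat σ (j := a.1+1) (by omega) (by omega)
    (key_ind σ k le_rfl (a.1+1) (by omega) (by omega)).2.2
  show sva (Pp σ) (a.1+1) - 1 = (σ a).1
  rw [hs, snat, dif_pos (show 1 ≤ a.1+1 ∧ a.1+1 ≤ k by omega)]
  have he : (⟨a.1 + 1 - 1, by omega⟩ : Fin k) = a := by
    apply Fin.ext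
    show a.1 + 1 - 1 = a.1
    omega
  rw [he]
  omega

end ThcAux

/-- **Proposition (bijection with permutations).** The map sending a tunnel hook
covering `γ` of `D_μ` with terminal cells `τ_r = (p_r, q_r)` to the sequence
`σ(γ)_r = p_r − q_r + 1` is a bijection onto `S_k`, whose inverse sends `σ` to the
tunnel hook covering with terminal cells `τ_r = (σ_r + m_r, 1 + m_r)` where
`m_r = #{ i < r : σ_i > σ_r }`.  (One-line values of `σ ∈ Equiv.Perm (Fin k)` at the
1-based position `r` are `(σ ⟨r−1⟩).1 + 1`; the equation `σ_r = p_r − q_r + 1` is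
stated additively as `σ_r + q_r = p_r + 1`.) -/
theorem thc_equiv_perm (k : ℕ) (hk : 1 ≤ k) (μ : ℕ → ℤ) :
    ∃ e : THC k μ (fun _ => 0) ≃ Equiv.Perm (Fin k),
      (∀ γ : THC k μ (fun _ => 0), ∀ r : Fin k,
        (((e γ) r : ℕ) + 1) + γ.q (r.1 + 1) = γ.p (r.1 + 1) + 1) ∧
      (∀ σ : Equiv.Perm (Fin k), ∀ r : Fin k,
        (e.symm σ).p (r.1 + 1) = ((σ r : ℕ) + 1) + mcount σ r ∧
        (e.symm σ).q (r.1 + 1) = 1 + mcount σ r) := by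
  refine ⟨⟨toPerm, fromPerm k μ, fromPerm_toPerm, toPerm_fromPerm μ⟩, ?_, ?_⟩
  · intro γ r
    have hval : ((toPerm γ) r).1 = sva γ.p (r.1 + 1) - 1 := toPerm_val γ r
    have hm : 1 ≤ sva γ.p (r.1+1) := (sva_mem γ (r := r.1+1) (by omega) (by omega)).1
    obtain ⟨hf1, hf2, hf3⟩ := thc_facts γ (r := r.1+1) (by omega) (by omega)
    have hsv : sva γ.p (r.1+1) = γ.p (r.1+1) - nuu γ.p (r.1+1-1) (γ.p (r.1+1)) := rfl
    have hnule : nuu γ.p (r.1+1-1) (γ.p (r.1+1)) ≤ r.1+1-1 :=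
      nuu_le γ.p (r.1+1-1) (γ.p (r.1+1)) (by omega)
    simp only [Equiv.coe_fn_mk]
    omega
  · intro σ r
    have hrk : 1 ≤ r.1 + 1 ∧ r.1 + 1 ≤ k := by omega
    have he : (⟨r.1 + 1 - 1, by omega⟩ : Fin k) = r := by
      apply Fin.ext
      show r.1 + 1 - 1 = r.1
      omega
    constructor
    · show Pp σ (r.1+1) = ((σ r : ℕ) + 1) + mcount σ r
      rw [Pp, if_pos hrk, snat, dif_pos hrk, mnat, dif_pos hrk, he]
    · show Qq σ (r.1+1) = 1 + mcount σ r
      rw [Qq, if_pos hrk, mnat, dif_pos hrk, he]
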